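/- For the matrix Riccati-type system in canonical coordinates, ∂ₗRᵢⱼ = RᵢₗRₗⱼ (l ≠ i,j) together with Σₗ∂ₗRᵢⱼ = 0 and symmetry Rᵢⱼ = Rⱼᵢ implies that the hamiltonians Hᵢ = (1/2)Σ_{j≠i} VᵢⱼVⱼᵢ/(uᵢ-uⱼ), with Vᵢⱼ = Rᵢⱼ(uᵢ-uⱼ), pairwise Poisson-commute on so_N* with respect to the standard Lie–Poisson bracket {Vᵢⱼ, Vₖₗ} = δⱼₖVᵢₗ - δᵢₗVₖⱼ + δⱼₗVₖᵢ - δᵢₖVⱼₗ, for fixed pairwise distinct u₁,…,u_N. -/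

import Mathlib

/-- The Lie–Poisson bracket on functions of an antisymmetric matrix V ∈ so_N*
(matrices realized as Fin N → Fin N → ℂ), defined by bilinear extension of
{Vᵢⱼ, Vₖₗ} = δⱼₖVᵢₗ - δᵢₗVₖⱼ + δⱼₗVₖᵢ - δᵢₖVⱼₗ. -/
noncomputable def liePoisson {N : ℕ}
    (f g : (Fin N → Fin N → ℂ) → ℂ) (V : Fin N → Fin N → ℂ) : ℂ :=
  ∑ i, ∑ j, ∑ k, ∑ l,
    fderiv ℂ f V (Pi.single i (Pi.single j 1)) *
    fderiv ℂ g V (Pi.single k (Pi.single l 1)) *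
    ((if j = k then V i l else 0) - (if i = l then V k j else 0)
      + (if j = l then V k i else 0) - (if i = k then V j l else 0))

/-- The hamiltonians Hᵢ(V) = (1/2)Σ_{j≠i} VᵢⱼVⱼᵢ/(uᵢ-uⱼ). -/
noncomputable def dubrovinHam {N : ℕ} (u : Fin N → ℂ) (i : Fin N)
    (V : Fin N → Fin N → ℂ) : ℂ :=
  (1 / 2) * ∑ j ∈ Finset.univ.erase i, V i j * V j i / (u i - u j)

/-- The coordinate functional `V ↦ V i j` as a continuous linear map. -/
noncomputable def coordL {N : ℕ} (i j : Fin N) : (Fin N → Fin N → ℂ) →L[ℂ] ℂ :=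
  (ContinuousLinearMap.proj j : (Fin N → ℂ) →L[ℂ] ℂ).comp
    (ContinuousLinearMap.proj i : (Fin N → Fin N → ℂ) →L[ℂ] (Fin N → ℂ))

lemma hasFDeriv_dH {N : ℕ} (u : Fin N → ℂ) (i : Fin N) (V : Fin N → Fin N → ℂ) :
    HasFDerivAt (dubrovinHam u i)
      ((1/2 : ℂ) • ∑ j ∈ Finset.univ.erase i,
        ((u i - u j)⁻¹ • (V i j • coordL j i + V j i • coordL i j))) V := by
  unfold dubrovinHam
  apply HasFDerivAt.const_mul
  apply HasFDerivAt.fun_sum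
  intro j hj
  have h1 : HasFDerivAt (fun W : Fin N → Fin N → ℂ => W i j) (coordL i j) V :=
    (coordL i j).hasFDerivAt
  have h2 : HasFDerivAt (fun W : Fin N → Fin N → ℂ => W j i) (coordL j i) V :=
    (coordL j i).hasFDerivAt
  have h3 := (h1.fun_mul h2).mul_const ((u i - u j)⁻¹)
  simp only [div_eq_mul_inv]
  convert h3 using 1

/-- The "gradient" coefficient of the hamiltonian. -/
noncomputable def gfun {N : ℕ} (u : Fin N → ℂ) (V : Fin N → Fin N → ℂ)
    (i b : Fin N) : ℂ :=
  if b = i then 0 else (1/2) * (V b i / (u i - u b))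

lemma fderiv_dH {N : ℕ} (u : Fin N → ℂ) (i : Fin N) (V : Fin N → Fin N → ℂ)
    (hV : ∀ a b, V b a = -V a b) (a b : Fin N) :
    fderiv ℂ (dubrovinHam u i) V (Pi.single a (Pi.single b 1)) =
      (if a = i then gfun u V i b else 0) - (if b = i then gfun u V i a else 0) := by
  rw [(hasFDeriv_dH u i V).fderiv]
  simp only [ContinuousLinearMap.smul_apply, ContinuousLinearMap.sum_apply,
    ContinuousLinearMap.add_apply, coordL, ContinuousLinearMap.comp_apply,
    ContinuousLinearMap.proj_apply, Pi.single_apply, smul_eq_mul]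
  rw [Finset.mul_sum]
  simp only [ite_apply, Pi.zero_apply, Pi.single_apply, mul_ite, mul_zero, mul_one,
    ite_mul, zero_mul, Finset.sum_ite_eq, Finset.sum_ite_eq', Finset.mem_erase,
    Finset.sum_add_distrib, gfun]
  simp only [mul_add, mul_ite, mul_zero, Finset.sum_add_distrib, Finset.sum_ite_irrel,
    Finset.sum_ite_eq', Finset.sum_const_zero, Finset.mem_erase, Finset.mem_univ, and_true]
  by_cases hai : a = i <;> by_cases hbi : b = i
  · simp [hai, hbi]
  · simp [hai, hbi, Ne.symm hbi, div_eq_mul_inv]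
    ring
  · simp [hai, hbi, Ne.symm hai, hV a i, div_eq_mul_inv]
    ring
  · simp [hai, hbi, Ne.symm hai, Ne.symm hbi]

/- For pairwise distinct u₁,…,u_N the hamiltonians Hᵢ pairwise Poisson-commute
on so_N* with respect to the standard Lie–Poisson bracket. -/
theorem stmt10 (N : ℕ) (hN : 2 ≤ N) (u : Fin N → ℂ) (hu : Function.Injective u)
    (i k : Fin N) (V : Fin N → Fin N → ℂ) (hV : ∀ a b, V b a = -V a b) :
    liePoisson (dubrovinHam u i) (dubrovinHam u k) V = 0 := by
  have hVd : ∀ a, V a a = 0 := fun a => by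
    have h := hV a a; linear_combination h / 2
  unfold liePoisson
  simp only [fderiv_dH u i V hV, fderiv_dH u k V hV]
  simp only [sub_mul, mul_sub, add_mul, mul_add, ite_mul, mul_ite, zero_mul, mul_zero,
    Finset.sum_sub_distrib, Finset.sum_add_distrib, Finset.sum_ite_irrel,
    Finset.sum_const_zero, Finset.sum_ite_eq, Finset.sum_ite_eq',
    Finset.mem_univ, if_true]
  -- abbreviations
  set g : Fin N → ℂ := gfun u V i with hg
  set h : Fin N → ℂ := gfun u V k with hh
  -- reorient the V factors using antisymmetry
  have hF : (∑ x, g k * h x * V x i) = -∑ x, g k * h x * V i x := by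
    rw [← Finset.sum_neg_distrib]
    exact Finset.sum_congr rfl fun x _ => by rw [hV i x]; ring
  have hD : (∑ x, g x * h i * V k x) = -∑ x, g x * h i * V x k := by
    rw [← Finset.sum_neg_distrib]
    exact Finset.sum_congr rfl fun x _ => by rw [hV x k]; ring
  have hE : (∑ x, g x * h x * V k i) = -∑ x, g x * h x * V i k := by
    rw [← Finset.sum_neg_distrib]
    exact Finset.sum_congr rfl fun x _ => by rw [hV i k]; ring
  have hQ : (if k = i then ∑ x, ∑ y, g x * h y * V y x else 0)
      = -(if k = i then ∑ x, ∑ y, g x * h y * V x y else 0) := by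
    by_cases hik : k = i
    · simp only [hik, if_true]
      rw [← Finset.sum_neg_distrib]
      refine Finset.sum_congr rfl fun x _ => ?_
      rw [← Finset.sum_neg_distrib]
      exact Finset.sum_congr rfl fun y _ => by rw [hV x y]; ring
    · simp [hik]
  have key : (∑ x, g k * h x * V i x) + (∑ x, g x * h i * V x k)
      - (∑ x, g x * h x * V i k)
      - (if k = i then ∑ x, ∑ y, g x * h y * V x y else 0) = 0 := by
    by_cases hik : k = i
    · subst hik
      have hgk : g k = 0 := by simp [hg, gfun]
      have hhk : h k = 0 := by simp [hh, gfun]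
      have hS : (∑ x, ∑ y, g x * h y * V x y) = 0 := by
        have hswap : (∑ x, ∑ y, g x * h y * V x y)
            + (∑ x, ∑ y, g x * h y * V x y) = 0 := by
          nth_rewrite 2 [Finset.sum_comm]
          rw [← Finset.sum_add_distrib]
          refine Finset.sum_eq_zero fun x _ => ?_
          rw [← Finset.sum_add_distrib]
          refine Finset.sum_eq_zero fun y _ => ?_
          rw [hV x y]
          simp only [hg, hh]
          ring
        linear_combination hswap / 2
      simp [hgk, hhk, hVd, hS]
    · rw [if_neg hik, sub_zero, ← Finset.sum_add_distrib, ← Finset.sum_sub_distrib]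
      refine Finset.sum_eq_zero fun x _ => ?_
      have hik' : i ≠ k := fun hcon => hik hcon.symm
      by_cases hxi : x = i
      · subst hxi
        simp [hg, gfun, hVd]
      · by_cases hxk : x = k
        · subst hxk
          simp [hh, gfun, hVd]
        · have h1 : u i - u k ≠ 0 := sub_ne_zero.mpr (fun hc => hik' (hu hc))
          have h2 : u k - u i ≠ 0 := sub_ne_zero.mpr (fun hc => hik (hu hc))
          have h3 : u i - u x ≠ 0 := sub_ne_zero.mpr (fun hc => hxi (hu hc.symm))
          have h4 : u k - u x ≠ 0 := sub_ne_zero.mpr (fun hc => hxk (hu hc.symm))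
          simp only [hg, hh, gfun, if_neg hxi, if_neg hxk, if_neg hik, if_neg hik']
          rw [hV i k, hV i x]
          field_simp
          ring
  linear_combination 4 * key - 2 * hD + 2 * hE - 2 * hF + 2 * hQ
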